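/- Upper bound for intermediate dimensions of X = {1/n : n ≥ 1}: for every θ ∈ (0,1) and every s > θ/(1+θ), for every ε > 0 there exists, for all sufficiently small r ∈ (0,1), a cover {B_k} of X with all diameters in [r, r^θ] satisfying Σ_k |B_k|^s < ε. -/

import Mathlib

open Set Metric

noncomputable section

/-- `coversWith X r n` : `X` can be covered by `n` sets each of diameter at most `r`. -/
def coversWith {α : Type*} [PseudoMetricSpace α] (X : Set α) (r : ℝ) (n : ℕ) : Prop :=
  ∃ B : Fin n → Set α, (∀ i, EMetric.diam (B i) ≤ ENNReal.ofReal r) ∧ X ⊆ ⋃ i, B i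

/-- The covering number `N_r(X)`: the minimal number of sets of diameter at most `r`
needed to cover `X`. -/
noncomputable def coverNum {α : Type*} [PseudoMetricSpace α] (X : Set α) (r : ℝ) : ℕ :=
  sInf {n : ℕ | coversWith X r n}

/-- Upper box dimension: infimum of `s ≥ 0` such that `N_r(X) ≤ C r^{-s}` for all `r ∈ (0,1)`. -/
noncomputable def upperBoxDim {α : Type*} [PseudoMetricSpace α] (X : Set α) : ℝ :=
  sInf {s : ℝ | 0 ≤ s ∧ ∃ C > (0:ℝ), ∀ r ∈ Ioo (0:ℝ) 1,
    (coverNum X r : ℝ) ≤ C * r ^ (-s)}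

/-- Assouad dimension (localisation at arbitrary centres `x`). -/
noncomputable def assouadDim {α : Type*} [PseudoMetricSpace α] (X : Set α) : ℝ :=
  sInf {s : ℝ | 0 ≤ s ∧ ∃ C > (0:ℝ), ∀ R > (0:ℝ), ∀ r ∈ Ioo (0:ℝ) R, ∀ x : α,
    (coverNum (X ∩ closedBall x R) r : ℝ) ≤ C * (R / r) ^ s}

/-- Assouad dimension (localisation at centres `x ∈ X`). -/
noncomputable def assouadDimOn {α : Type*} [PseudoMetricSpace α] (X : Set α) : ℝ :=
  sInf {s : ℝ | 0 ≤ s ∧ ∃ C > (0:ℝ), ∀ R > (0:ℝ), ∀ r ∈ Ioo (0:ℝ) R, ∀ x ∈ X,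
    (coverNum (X ∩ closedBall x R) r : ℝ) ≤ C * (R / r) ^ s}

/-- Upper θ-intermediate dimension, for `θ ∈ (0,1]`: infimum of `s ≥ 0` such that for all
`ε > 0` and all sufficiently small `δ ∈ (0,1)` there is a cover of `X` with all diameters in
`[δ^(1/θ), δ]` and `s`-cost less than `ε`. -/
noncomputable def interDim {α : Type*} [PseudoMetricSpace α] (θ : ℝ) (X : Set α) : ℝ :=
  sInf {s : ℝ | 0 ≤ s ∧ ∀ ε > (0:ℝ), ∃ δ₀ ∈ Ioo (0:ℝ) 1, ∀ δ ∈ Ioo (0:ℝ) δ₀,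
    ∃ n, ∃ B : Fin n → Set α, X ⊆ (⋃ i, B i) ∧
      (∀ i, Metric.diam (B i) ∈ Icc (δ ^ (1/θ)) δ) ∧
      ∑ i, Metric.diam (B i) ^ s < ε}

/-- Assouad spectrum at `θ` (localisation at arbitrary centres `x`). -/
noncomputable def assouadSpec {α : Type*} [PseudoMetricSpace α] (θ : ℝ) (X : Set α) : ℝ :=
  sInf {s : ℝ | 0 ≤ s ∧ ∃ C > (0:ℝ), ∀ r ∈ Ioo (0:ℝ) 1, ∀ x : α,
    (coverNum (X ∩ closedBall x (r ^ θ)) r : ℝ) ≤ C * (r ^ θ / r) ^ s}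

/-- Assouad spectrum at `θ` (localisation at centres `x ∈ X`). -/
noncomputable def assouadSpecOn {α : Type*} [PseudoMetricSpace α] (θ : ℝ) (X : Set α) : ℝ :=
  sInf {s : ℝ | 0 ≤ s ∧ ∃ C > (0:ℝ), ∀ r ∈ Ioo (0:ℝ) 1, ∀ x ∈ X,
    (coverNum (X ∩ closedBall x (r ^ θ)) r : ℝ) ≤ C * (r ^ θ / r) ^ s}

/-- The set `X = {1/n : n ∈ ℕ, n ≥ 1} ⊆ ℝ`. -/
def recipSet : Set ℝ := {x : ℝ | ∃ n : ℕ, 1 ≤ n ∧ x = 1 / (n : ℝ)}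

end
theorem stmt10 (θ : ℝ) (hθ : θ ∈ Ioo (0:ℝ) 1) (s : ℝ) (hs : θ / (1 + θ) < s)
    (ε : ℝ) (hε : 0 < ε) :
    ∃ r₀ > (0:ℝ), ∀ r ∈ Ioo (0:ℝ) r₀, ∃ n, ∃ B : Fin n → Set ℝ,
      recipSet ⊆ (⋃ i, B i) ∧
      (∀ i, Metric.diam (B i) ∈ Icc r (r ^ θ)) ∧
      ∑ i, Metric.diam (B i) ^ s < ε := by
  obtain ⟨hθ0, hθ1⟩ := hθ
  have hθ0' : (0:ℝ) < 1 + θ := by linarith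
  have hs0 : 0 < s := lt_trans (by positivity) hs
  have hkey : θ * (1 - s) < s := by
    have h := (div_lt_iff₀ hθ0').mp hs
    nlinarith
  set a : ℝ := (s + θ * (1 - s)) / 2 with ha
  have ha1 : a < s := by rw [ha]; linarith
  have ha2 : θ * (1 - s) < a := by rw [ha]; linarith
  set e : ℝ := min (min (s - a) s) (min (a - θ + θ * s) (θ * s)) with he
  have he0 : 0 < e := by
    rw [he]
    simp only [lt_min_iff]
    refine ⟨⟨by linarith, hs0⟩, ⟨by linarith, by positivity⟩⟩
  have hq0 : (0:ℝ) < (ε/4) ^ (1/e) := Real.rpow_pos_of_pos (by positivity) _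
  refine ⟨min 1 ((ε/4) ^ (1/e)), lt_min one_pos hq0, ?_⟩
  rintro r ⟨hr0, hr1⟩
  have hrlt1 : r < 1 := lt_of_lt_of_le hr1 (min_le_left _ _)
  have hre : r ^ e < ε/4 := by
    have h1 : r < (ε/4) ^ (1/e) := lt_of_lt_of_le hr1 (min_le_right _ _)
    calc r ^ e < ((ε/4) ^ (1/e)) ^ e := Real.rpow_lt_rpow hr0.le h1 he0
      _ = ε/4 := by
          rw [← Real.rpow_mul (by positivity), one_div, inv_mul_cancel₀ he0.ne',
            Real.rpow_one]
  have hrθ : 0 < r ^ θ := Real.rpow_pos_of_pos hr0 _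
  have hrrθ : r ≤ r ^ θ := by
    have := Real.rpow_le_rpow_of_exponent_ge hr0 hrlt1.le hθ1.le
    rwa [Real.rpow_one] at this
  set M : ℕ := ⌈r ^ (-a)⌉₊ with hM
  have hM0' : (0:ℝ) < M := by
    exact_mod_cast Nat.ceil_pos.2 (Real.rpow_pos_of_pos hr0 _)
  set K : ℕ := ⌈1 / ((M:ℝ) * r ^ θ)⌉₊ with hK
  set B : Fin (M + K) → Set ℝ :=
    Fin.append (fun i : Fin M => Icc (1/((i:ℕ)+1:ℝ)) (1/((i:ℕ)+1:ℝ) + r))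
      (fun j : Fin K => Icc (((j:ℕ):ℝ) * r ^ θ) (((j:ℕ):ℝ) * r ^ θ + r ^ θ)) with hB
  refine ⟨M + K, B, ?_, ?_, ?_⟩
  · rintro x ⟨n, hn1, rfl⟩
    have hn0 : (0:ℝ) < n := by exact_mod_cast hn1
    by_cases hnM : n ≤ M
    · refine mem_iUnion.2 ⟨Fin.castAdd K ⟨n-1, by omega⟩, ?_⟩
      rw [hB, Fin.append_left]
      have hcast : (((n-1 : ℕ):ℝ) + 1) = (n:ℝ) := by
        have : ((n-1 : ℕ):ℝ) = (n:ℝ) - 1 := by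
          push_cast [Nat.cast_sub hn1]; ring
        rw [this]; ring
      simp only [Fin.val_mk, hcast]
      exact ⟨le_refl _, by linarith⟩
    · push_neg at hnM
      set j : ℕ := ⌊1 / ((n:ℝ) * r ^ θ)⌋₊ with hj
      have hx0 : (0:ℝ) ≤ 1 / ((n:ℝ) * r ^ θ) := by positivity
      have hjK : j < K := by
        have h1 : (j:ℝ) ≤ 1 / ((n:ℝ) * r ^ θ) := Nat.floor_le hx0
        have h2 : 1 / ((n:ℝ) * r ^ θ) < 1 / ((M:ℝ) * r ^ θ) := by
          apply one_div_lt_one_div_of_lt (by positivity)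
          exact mul_lt_mul_of_pos_right (by exact_mod_cast hnM) hrθ
        have h3 : 1 / ((M:ℝ) * r ^ θ) ≤ (K:ℝ) := Nat.le_ceil _
        exact_mod_cast lt_of_le_of_lt h1 (lt_of_lt_of_le h2 h3)
      refine mem_iUnion.2 ⟨Fin.natAdd M ⟨j, hjK⟩, ?_⟩
      rw [hB, Fin.append_right]
      simp only [Fin.val_mk]
      have heq : (1 / ((n:ℝ) * r ^ θ)) * r ^ θ = 1 / (n:ℝ) := by
        field_simp
      constructor
      · have h1 : (j:ℝ) ≤ 1 / ((n:ℝ) * r ^ θ) := Nat.floor_le hx0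
        have := mul_le_mul_of_nonneg_right h1 hrθ.le
        rw [heq] at this
        linarith
      · have h1 : 1 / ((n:ℝ) * r ^ θ) < (j:ℝ) + 1 := Nat.lt_floor_add_one _
        have := mul_lt_mul_of_pos_right h1 hrθ
        rw [heq] at this
        nlinarith
  · intro i
    refine Fin.addCases (fun i => ?_) (fun j => ?_) i
    · rw [hB, Fin.append_left, Real.diam_Icc (by linarith)]
      constructor
      · simp
      · simpa using hrrθ
    · rw [hB, Fin.append_right, Real.diam_Icc (by linarith)]
      constructor
      · simpa using hrrθ
      · simp
  · have hsum : ∑ i, Metric.diam (B i) ^ s = (M:ℝ) * r ^ s + (K:ℝ) * (r ^ θ) ^ s := by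
      rw [hB, Fin.sum_univ_add]
      congr 1
      · rw [Finset.sum_congr rfl (fun i _ => ?_), Finset.sum_const, Finset.card_univ,
          Fintype.card_fin, nsmul_eq_mul]
        rw [Fin.append_left, Real.diam_Icc (by linarith)]
        congr 1
        ring
      · rw [Finset.sum_congr rfl (fun i _ => ?_), Finset.sum_const, Finset.card_univ,
          Fintype.card_fin, nsmul_eq_mul]
        rw [Fin.append_right, Real.diam_Icc (by linarith)]
        congr 1
        ring
    rw [hsum]
    have hrs : (0:ℝ) < r ^ s := Real.rpow_pos_of_pos hr0 _
    have hrθs : (0:ℝ) < (r ^ θ) ^ s := Real.rpow_pos_of_pos hrθ _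
    have hMle : (M:ℝ) ≤ r ^ (-a) + 1 :=
      (Nat.ceil_lt_add_one (le_of_lt (Real.rpow_pos_of_pos hr0 _))).le
    have hKle : (K:ℝ) ≤ r ^ (a - θ) + 1 := by
      have h1 : (K:ℝ) < 1 / ((M:ℝ) * r ^ θ) + 1 := Nat.ceil_lt_add_one (by positivity)
      have h2 : 1 / ((M:ℝ) * r ^ θ) ≤ r ^ (a - θ) := by
        have hle : r ^ (-a) ≤ (M:ℝ) := Nat.le_ceil _
        have h3 : r ^ (θ - a) ≤ (M:ℝ) * r ^ θ := by
          rw [show θ - a = -a + θ by ring, Real.rpow_add hr0]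
          exact mul_le_mul_of_nonneg_right hle hrθ.le
        calc 1 / ((M:ℝ) * r ^ θ) ≤ 1 / (r ^ (θ - a)) :=
              one_div_le_one_div_of_le (Real.rpow_pos_of_pos hr0 _) h3
          _ = r ^ (a - θ) := by
              rw [one_div, ← Real.rpow_neg hr0.le]
              ring_nf
      linarith
    have t2 : (r ^ θ) ^ s = r ^ (θ * s) := (Real.rpow_mul hr0.le θ s).symm
    have t1 : r ^ (-a) * r ^ s = r ^ (s - a) := by
      rw [← Real.rpow_add hr0]; ring_nf
    have t3 : r ^ (a - θ) * r ^ (θ * s) = r ^ (a - θ + θ * s) := by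
      rw [← Real.rpow_add hr0]
    have hbound : (M:ℝ) * r ^ s + (K:ℝ) * (r ^ θ) ^ s ≤
        r ^ (s - a) + r ^ s + (r ^ (a - θ + θ * s) + r ^ (θ * s)) := by
      calc (M:ℝ) * r ^ s + (K:ℝ) * (r ^ θ) ^ s
          ≤ (r ^ (-a) + 1) * r ^ s + (r ^ (a - θ) + 1) * (r ^ θ) ^ s := by
            have := mul_le_mul_of_nonneg_right hMle hrs.le
            have := mul_le_mul_of_nonneg_right hKle hrθs.le
            linarith
        _ = r ^ (s - a) + r ^ s + (r ^ (a - θ + θ * s) + r ^ (θ * s)) := by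
            rw [t2, add_mul, add_mul, one_mul, one_mul, t1, t3]
    have hmono : ∀ y : ℝ, e ≤ y → r ^ y ≤ r ^ e := fun y hy =>
      Real.rpow_le_rpow_of_exponent_ge hr0 hrlt1.le hy
    have b1 : r ^ (s - a) ≤ r ^ e := hmono _ (le_trans (min_le_left _ _) (min_le_left _ _))
    have b2 : r ^ s ≤ r ^ e := hmono _ (le_trans (min_le_left _ _) (min_le_right _ _))
    have b3 : r ^ (a - θ + θ * s) ≤ r ^ e :=
      hmono _ (le_trans (min_le_right _ _) (min_le_left _ _))
    have b4 : r ^ (θ * s) ≤ r ^ e := hmono _ (le_trans (min_le_right _ _) (min_le_right _ _))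
    linarith
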